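/- The expected hitting time of the restarted chain to the target set H is finite for q-almost every initial state if and only if q(H) > 0; moreover these are equivalent to finiteness for every initial state, and to uniform boundedness sup_{x∈E} E_x[η_H] < ∞. -/

import Mathlib

open MeasureTheory ProbabilityTheory ENNReal

/-- The `t`-step iterate `P^t` of a transition kernel, with `P^0(x,·) = δ_x`. -/
noncomputable def iterKernel {E : Type*} [MeasurableSpace E] (P : Kernel E E) :
    ℕ → Kernel E E
  | 0 => Kernel.id
  | t + 1 => P ∘ₖ iterKernel P t

/-- The iterates of the taboo kernel `{}_H P(x,Γ) := P(x, Γ \ H)`, given the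
complement `Hᶜ` as a measurable set; `{}_H P^0(x,Γ) = δ_x(Γ \ H)`, so that
`{}_H P^0(x,E) = 1{x ∉ H}`. -/
noncomputable def tabooIter {E : Type*} [MeasurableSpace E] (P : Kernel E E)
    {Hc : Set E} (hHc : MeasurableSet Hc) : ℕ → Kernel E E
  | 0 => Kernel.id.restrict hHc
  | t + 1 => (P.restrict hHc) ∘ₖ tabooIter P hHc t

section Aux

variable {E : Type*} [MeasurableSpace E] (P : Kernel E E) [IsMarkovKernel P]
  {Hc : Set E} (hHc : MeasurableSet Hc)

lemma iterKernel_succ (t : ℕ) : iterKernel P (t + 1) = P ∘ₖ iterKernel P t := rfl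

lemma iterKernel_zero : iterKernel P 0 = Kernel.id := rfl

lemma tabooIter_succ (t : ℕ) :
    tabooIter P hHc (t + 1) = (P.restrict hHc) ∘ₖ tabooIter P hHc t := rfl

lemma tabooIter_zero : tabooIter P hHc 0 = Kernel.id.restrict hHc := rfl

lemma iterKernel_markov (t : ℕ) : IsMarkovKernel (iterKernel P t) := by
  induction t with
  | zero => rw [iterKernel_zero]; infer_instance
  | succ t ih => rw [iterKernel_succ]; infer_instance

lemma tabooIter_zero_of_not_mem : ∀ t : ℕ, ∀ x ∉ Hc, tabooIter P hHc t x = 0 := by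
  intro t
  induction t with
  | zero =>
    intro x hx
    rw [tabooIter_zero, Kernel.restrict_apply, Kernel.id_apply]
    rw [Measure.restrict_eq_zero, Measure.dirac_apply' _ hHc,
      Set.indicator_of_notMem hx]
  | succ t ih =>
    intro x hx
    rw [tabooIter_succ, Kernel.comp_apply, ih x hx, Measure.bind_zero_left]

lemma tabooIter_le_iterKernel : ∀ t : ℕ, ∀ x, tabooIter P hHc t x ≤ iterKernel P t x := by
  intro t
  induction t with
  | zero =>
    intro x
    rw [tabooIter_zero, iterKernel_zero, Kernel.restrict_apply, Kernel.id_apply]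
    exact Measure.restrict_le_self
  | succ t ih =>
    intro x
    refine Measure.le_iff.2 fun s hs => ?_
    rw [tabooIter_succ, iterKernel_succ, Kernel.comp_apply' _ _ _ hs, Kernel.comp_apply' _ _ _ hs]
    calc ∫⁻ z, (P.restrict hHc) z s ∂(tabooIter P hHc t x)
        ≤ ∫⁻ z, P z s ∂(tabooIter P hHc t x) := by
          refine lintegral_mono fun z => ?_
          rw [Kernel.restrict_apply' _ _ _ hs]
          exact measure_mono (Set.inter_subset_left)
      _ ≤ ∫⁻ z, P z s ∂(iterKernel P t x) := lintegral_mono' (ih x) le_rfl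

lemma tabooIter_compl_zero : ∀ t : ℕ, ∀ x, tabooIter P hHc t x Hcᶜ = 0 := by
  intro t
  induction t with
  | zero =>
    intro x
    rw [tabooIter_zero, Kernel.restrict_apply, Kernel.id_apply,
      Measure.restrict_apply hHc.compl]
    simp
  | succ t ih =>
    intro x
    rw [tabooIter_succ, Kernel.comp_apply' _ _ _ hHc.compl]
    have : ∀ z, (P.restrict hHc) z Hcᶜ = 0 := fun z => by
      rw [Kernel.restrict_apply' _ _ _ hHc.compl]
      simp
    simp [this]

lemma tabooIter_succ_of_mem : ∀ t : ℕ, ∀ x ∈ Hc,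
    tabooIter P hHc (t + 1) x = ((P.restrict hHc) x).bind (tabooIter P hHc t) := by
  intro t
  induction t with
  | zero =>
    intro x hx
    rw [tabooIter_succ, Kernel.comp_apply]
    have h0 : tabooIter P hHc 0 x = Measure.dirac x := by
      rw [tabooIter_zero, Kernel.restrict_apply, Kernel.id_apply]
      ext s hs
      rw [Measure.restrict_apply hs, Measure.dirac_apply' _ (hs.inter hHc),
        Measure.dirac_apply' _ hs]
      by_cases hxs : x ∈ s
      · rw [Set.indicator_of_mem (Set.mem_inter hxs hx), Set.indicator_of_mem hxs]
      · rw [Set.indicator_of_notMem (fun h => hxs h.1), Set.indicator_of_notMem hxs]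
    rw [h0, Measure.dirac_bind (Kernel.measurable _)]
    ext s hs
    rw [Measure.bind_apply hs (Kernel.measurable _).aemeasurable]
    have : ∀ z, tabooIter P hHc 0 z s = Set.indicator (s ∩ Hc) 1 z := fun z => by
      rw [tabooIter_zero, Kernel.restrict_apply, Kernel.id_apply, Measure.restrict_apply hs,
        Measure.dirac_apply' _ (hs.inter hHc)]
    simp_rw [this]
    rw [lintegral_indicator_one (hs.inter hHc), Kernel.restrict_apply' _ _ _ (hs.inter hHc),
      Kernel.restrict_apply' _ _ _ hs, Set.inter_assoc, Set.inter_self]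
  | succ t ih =>
    intro x hx
    have step : ∀ z, tabooIter P hHc (t + 1) z = (tabooIter P hHc t z).bind (P.restrict hHc) :=
      fun z => by rw [tabooIter_succ, Kernel.comp_apply]
    rw [tabooIter_succ P hHc (t + 1), Kernel.comp_apply, ih x hx,
      Measure.bind_bind (Kernel.measurable _).aemeasurable (Kernel.measurable _).aemeasurable]
    exact congrArg (Measure.bind _) (funext fun z => (step z).symm)

end Aux

lemma ennreal_tsum_shift (f : ℕ → ℝ≥0∞) : ∑' t, f t = f 0 + ∑' t, f (t + 1) :=
  tsum_eq_zero_add' ENNReal.summable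

lemma measurable_lintegral_kernel {E : Type*} [MeasurableSpace E] (κ : Kernel E E)
    [IsSFiniteKernel κ] {f : E → ℝ≥0∞} (hf : Measurable f) :
    Measurable fun x => ∫⁻ y, f y ∂(κ x) :=
  Measurable.lintegral_kernel_prod_right' (κ := κ) (hf.comp measurable_snd)

/-- Equivalence theorem. Here `V x = E_x[η_H]`, the expected hitting time of
`H` by the restarted chain, is encoded by its standard characterization as the
minimal nonnegative solution of the dynamic programming equation
`V(x) = 1 + p ∫ V dν + (1-p) ∫ V(y) {}_H P(x,dy)` for `x ∉ H`, `V = 0` on `H`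
(Bertsekas–Shreve, Prop. 9.10). The following are equivalent:
(a) `q(H) > 0`; (b) `V(x) < ∞` for every `x`; (c) `V(x) < ∞` for `q`-a.e. `x`;
(d) `sup_x V(x) < ∞`. -/
theorem stmt11 {E : Type*} [MeasurableSpace E] [Nonempty E]
    (P : Kernel E E) [IsMarkovKernel P]
    (ν : Measure E) [IsProbabilityMeasure ν]
    (p : ℝ≥0∞) (hp0 : 0 < p) (hp1 : p < 1)
    (H : Set E) (hH : MeasurableSet H)
    (q : Measure E)
    (hq : ∀ Γ : Set E, MeasurableSet Γ →
      q Γ = ∫⁻ y, ∑' t : ℕ, p * (1 - p) ^ t * iterKernel P t y Γ ∂ν)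
    (V : E → ℝ≥0∞) (hVmeas : Measurable V)
    (hVeq : ∀ x ∉ H, V x = 1 + p * ∫⁻ y, V y ∂ν +
      (1 - p) * ∫⁻ y, V y ∂((P.restrict hH.compl) x))
    (hVH : ∀ x ∈ H, V x = 0)
    (hVmin : ∀ U : E → ℝ≥0∞, Measurable U →
      (∀ x ∉ H, U x = 1 + p * ∫⁻ y, U y ∂ν +
        (1 - p) * ∫⁻ y, U y ∂((P.restrict hH.compl) x)) →
      (∀ x ∈ H, U x = 0) → ∀ x, V x ≤ U x) :
    List.TFAE [0 < q H, ∀ x, V x < ⊤, ∀ᵐ x ∂q, V x < ⊤, ⨆ x, V x < ⊤] := by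
  have hptop : p ≠ ⊤ := hp1.ne_top
  set r : ℝ≥0∞ := 1 - p with hrdef
  have hr1 : 1 - r = p := ENNReal.sub_sub_cancel one_ne_top hp1.le
  have hrle1 : r ≤ 1 := tsub_le_self
  have hrtop : r ≠ ⊤ := ne_top_of_le_ne_top one_ne_top hrle1
  have hrne0 : r ≠ 0 := by simpa [hrdef, tsub_eq_zero_iff_le] using hp1.not_ge
  have hsumr : ∑' t : ℕ, r ^ t = p⁻¹ := by rw [ENNReal.tsum_geometric, hr1]
  have hsum1 : ∑' t : ℕ, p * r ^ t = 1 := by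
    rw [ENNReal.tsum_mul_left, hsumr, ENNReal.mul_inv_cancel hp0.ne' hptop]
  -- swap integral and sum in `hq`
  have hqswap : ∀ Γ : Set E, MeasurableSet Γ →
      q Γ = ∑' t : ℕ, p * r ^ t * ∫⁻ y, iterKernel P t y Γ ∂ν := by
    intro Γ hΓ
    rw [hq Γ hΓ, lintegral_tsum fun t =>
      ((Kernel.measurable_coe _ hΓ).const_mul _).aemeasurable]
    exact tsum_congr fun t => lintegral_const_mul _ (Kernel.measurable_coe _ hΓ)
  -- the restricted integral of V coincides with the unrestricted one
  have hVP : ∀ x : E, ∫⁻ y, V y ∂((P.restrict hH.compl) x) = ∫⁻ y, V y ∂(P x) := by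
    intro x
    rw [Kernel.restrict_apply, ← lintegral_add_compl V hH (μ := P x)]
    have h1 : ∫⁻ y in H, V y ∂(P x) = 0 := by
      rw [setLIntegral_congr_fun hH (fun y hy => hVH y hy)]
      simp
    rw [h1, zero_add]
  tfae_have 4 → 2
  · exact fun h x => lt_of_le_of_lt (le_iSup V x) h
  tfae_have 2 → 3
  · exact fun h => ae_of_all q h
  tfae_have 1 → 4
  · intro hqH
    set I : ℝ≥0∞ := ∫⁻ y, V y ∂ν with hIdef
    set m : ℕ → E → ℝ≥0∞ := fun t x => tabooIter P hH.compl t x Set.univ with hmdef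
    have hmmeas : ∀ t, Measurable (m t) := fun t =>
      Kernel.measurable_coe _ MeasurableSet.univ
    have hm1 : ∀ t x, m t x ≤ 1 := fun t x => by
      haveI := iterKernel_markov P t
      calc m t x ≤ iterKernel P t x Set.univ :=
            Measure.le_iff'.1 (tabooIter_le_iterKernel P hH.compl t x) Set.univ
        _ = 1 := measure_univ
    have hmH : ∀ t, ∀ x ∈ H, m t x = 0 := fun t x hx => by
      simp only [hmdef]
      rw [tabooIter_zero_of_not_mem P hH.compl t x (fun hc => hc hx)]
      rfl
    have hmHc : ∀ t x, m t x ≤ iterKernel P t x Hᶜ := by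
      intro t x
      have h1 : m t x ≤ tabooIter P hH.compl t x Hᶜ := by
        have h2 := measure_union_le (μ := tabooIter P hH.compl t x) Hᶜ Hᶜᶜ
        rw [Set.union_compl_self, tabooIter_compl_zero P hH.compl t x, add_zero] at h2
        exact h2
      exact h1.trans (Measure.le_iff'.1 (tabooIter_le_iterKernel P hH.compl t x) Hᶜ)
    have hm0 : ∀ x ∉ H, m 0 x = 1 := by
      intro x hx
      simp only [hmdef]
      rw [tabooIter_zero, Kernel.restrict_apply, Kernel.id_apply,
        Measure.restrict_apply MeasurableSet.univ, Set.univ_inter,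
        Measure.dirac_apply' _ hH.compl, Set.indicator_of_mem (Set.mem_compl hx)]
      rfl
    have hrec : ∀ t, ∀ x ∉ H, m (t + 1) x = ∫⁻ z, m t z ∂((P.restrict hH.compl) x) := by
      intro t x hx
      simp only [hmdef]
      rw [tabooIter_succ_of_mem P hH.compl t x hx,
        Measure.bind_apply MeasurableSet.univ (Kernel.measurable _).aemeasurable]
    set A : ℝ≥0∞ := ∑' t : ℕ, r ^ t * ∫⁻ y, m t y ∂ν with hAdef
    have hBle : p * A + q H ≤ 1 := by
      rw [hqswap H hH, hAdef, ← ENNReal.tsum_mul_left, ← ENNReal.tsum_add]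
      calc ∑' t : ℕ, (p * (r ^ t * ∫⁻ y, m t y ∂ν) + p * r ^ t * ∫⁻ y, iterKernel P t y H ∂ν)
          ≤ ∑' t : ℕ, p * r ^ t := by
            refine ENNReal.tsum_le_tsum fun t => ?_
            haveI := iterKernel_markov P t
            have h3 : (∫⁻ y, m t y ∂ν) + ∫⁻ y, iterKernel P t y H ∂ν ≤ 1 := by
              calc (∫⁻ y, m t y ∂ν) + ∫⁻ y, iterKernel P t y H ∂ν
                  ≤ (∫⁻ y, iterKernel P t y Hᶜ ∂ν) + ∫⁻ y, iterKernel P t y H ∂ν :=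
                    add_le_add_left (lintegral_mono (hmHc t)) _
                _ = ∫⁻ y, (iterKernel P t y Hᶜ + iterKernel P t y H) ∂ν :=
                    (lintegral_add_left (Kernel.measurable_coe _ hH.compl) _).symm
                _ = 1 := by
                    have h4 : ∀ y : E, iterKernel P t y Hᶜ + iterKernel P t y H = 1 :=
                      fun y => by rw [add_comm, measure_add_measure_compl hH, measure_univ]
                    simp [h4]
            calc p * (r ^ t * ∫⁻ y, m t y ∂ν) + p * r ^ t * ∫⁻ y, iterKernel P t y H ∂ν
                = p * r ^ t * ((∫⁻ y, m t y ∂ν) + ∫⁻ y, iterKernel P t y H ∂ν) := by ring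
              _ ≤ p * r ^ t * 1 := mul_le_mul_right h3 _
              _ = p * r ^ t := mul_one _
        _ = 1 := hsum1
    have hBlt : p * A < 1 := by
      refine lt_of_le_of_ne (le_trans (self_le_add_right _ _) hBle) fun heq => ?_
      rw [heq] at hBle
      exact absurd hBle (ENNReal.lt_add_right one_ne_top hqH.ne').not_ge
    set c : ℝ≥0∞ := (1 - p * A)⁻¹ with hcdef
    have hsub0 : (1 - p * A) ≠ 0 := by
      simpa [tsub_eq_zero_iff_le] using hBlt.not_ge
    have hctop : c ≠ ⊤ := ENNReal.inv_ne_top.2 hsub0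
    have hc : c = 1 + p * A * c := by
      have h2 : (1 - p * A) * c = 1 :=
        ENNReal.mul_inv_cancel hsub0 (ne_top_of_le_ne_top one_ne_top tsub_le_self)
      calc c = 1 * c := (one_mul c).symm
        _ = ((1 - p * A) + p * A) * c := by rw [tsub_add_cancel_of_le hBlt.le]
        _ = (1 - p * A) * c + p * A * c := add_mul _ _ _
        _ = 1 + p * A * c := by rw [h2]
    set U : E → ℝ≥0∞ := fun x => c * ∑' t : ℕ, r ^ t * m t x with hUdef
    have hUmeas : Measurable U :=
      measurable_const.mul (Measurable.ennreal_tsum fun t => (hmmeas t).const_mul _)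
    have hUH : ∀ x ∈ H, U x = 0 := by
      intro x hx
      simp only [hUdef]
      simp [hmH _ x hx]
    have hUnu : ∫⁻ y, U y ∂ν = c * A := by
      simp only [hUdef, hAdef]
      rw [lintegral_const_mul _ (Measurable.ennreal_tsum fun t => (hmmeas t).const_mul _),
        lintegral_tsum fun t => ((hmmeas t).const_mul _).aemeasurable]
      congr 1
      exact tsum_congr fun t => lintegral_const_mul _ (hmmeas t)
    have hUbound : ∀ x, U x ≤ c * p⁻¹ := by
      intro x
      simp only [hUdef]
      refine mul_le_mul_right ?_ c
      rw [← hsumr]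
      exact ENNReal.tsum_le_tsum fun t => by
        calc r ^ t * m t x ≤ r ^ t * 1 := mul_le_mul_right (hm1 t x) _
          _ = r ^ t := mul_one _
    have hUeq : ∀ x ∉ H, U x = 1 + p * ∫⁻ y, U y ∂ν +
        (1 - p) * ∫⁻ y, U y ∂((P.restrict hH.compl) x) := by
      intro x hx
      have hS : ∫⁻ y, U y ∂((P.restrict hH.compl) x) =
          c * ∑' t : ℕ, r ^ t * m (t + 1) x := by
        simp only [hUdef]
        rw [lintegral_const_mul _ (Measurable.ennreal_tsum fun t => (hmmeas t).const_mul _),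
          lintegral_tsum fun t => ((hmmeas t).const_mul _).aemeasurable]
        congr 1
        refine tsum_congr fun t => ?_
        rw [lintegral_const_mul _ (hmmeas t), hrec t x hx]
      rw [hUnu, hS, ← hrdef]
      have hsplit : U x = c * (1 + r * ∑' t : ℕ, r ^ t * m (t + 1) x) := by
        simp only [hUdef]
        congr 1
        rw [ennreal_tsum_shift (fun t => r ^ t * m t x), pow_zero, one_mul, hm0 x hx]
        congr 1
        rw [← ENNReal.tsum_mul_left]
        exact tsum_congr fun t => by rw [pow_succ', mul_assoc]
      rw [hsplit]
      calc c * (1 + r * ∑' t : ℕ, r ^ t * m (t + 1) x)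
          = c + c * (r * ∑' t : ℕ, r ^ t * m (t + 1) x) := by ring
        _ = (1 + p * A * c) + c * (r * ∑' t : ℕ, r ^ t * m (t + 1) x) := by rw [← hc]
        _ = 1 + p * (c * A) + r * (c * ∑' t : ℕ, r ^ t * m (t + 1) x) := by ring
    refine lt_of_le_of_lt (iSup_le fun x => (hVmin U hUmeas hUeq hUH x).trans (hUbound x)) ?_
    exact ENNReal.mul_lt_top hctop.lt_top (ENNReal.inv_lt_top.2 hp0)
  tfae_have 3 → 1
  · intro hae
    by_contra hq0'
    have hq0 : q H = 0 := by
      simpa using (not_lt.1 hq0')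
    have h0 : ∀ t : ℕ, ∫⁻ y, iterKernel P t y H ∂ν = 0 := by
      intro t
      have h1 := (hqswap H hH).symm.trans hq0
      have h2 := ENNReal.tsum_eq_zero.1 h1 t
      have h3 : p * r ^ t ≠ 0 := mul_ne_zero hp0.ne' (pow_ne_zero t hrne0)
      exact (mul_eq_zero.1 h2).resolve_left h3
    have hνH : ν H = 0 := by
      have h1 := h0 0
      rw [iterKernel_zero] at h1
      simp only [Kernel.id_apply] at h1
      simp_rw [Measure.dirac_apply' _ hH] at h1
      rwa [lintegral_indicator_one hH] at h1
    set I : ℝ≥0∞ := ∫⁻ y, V y ∂ν with hIdef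
    have hI : I = ⊤ := by
      by_contra hItop
      set K : ℝ≥0∞ := 1 + p * I with hKdef
      set g : E → ℝ≥0∞ := fun z => ∫⁻ y, V y ∂(P z) with hgdef
      have hgmeas : Measurable g := measurable_lintegral_kernel P hVmeas
      set J : ℕ → ℝ≥0∞ := fun t => ∫⁻ y, (∫⁻ z, V z ∂(iterKernel P t y)) ∂ν with hJdef
      have hJfam : ∀ t, Measurable fun y => ∫⁻ z, V z ∂(iterKernel P t y) := fun t => by
        haveI := iterKernel_markov P t
        exact measurable_lintegral_kernel (iterKernel P t) hVmeas
      have hJ0 : J 0 = I := by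
        simp only [hJdef, iterKernel_zero, Kernel.id_apply, hIdef]
        exact lintegral_congr fun y => lintegral_dirac' y hVmeas
      have hstep : ∀ t, J t = K + r * J (t + 1) := by
        intro t
        haveI := iterKernel_markov P t
        have hae_t : ∀ᵐ y ∂ν, iterKernel P t y H = 0 :=
          (lintegral_eq_zero_iff (Kernel.measurable_coe _ hH)).1 (h0 t)
        have key : ∀ᵐ y ∂ν, (∫⁻ z, V z ∂(iterKernel P t y)) =
            K + r * ∫⁻ z, V z ∂(iterKernel P (t + 1) y) := by
          filter_upwards [hae_t] with y hy
          set μ := iterKernel P t y with hμdef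
          have hμc : μ Hᶜ = 1 := by
            rw [measure_compl hH (measure_ne_top _ _), hy, measure_univ, tsub_zero]
          have hgH : ∫⁻ z in H, g z ∂μ = 0 := setLIntegral_measure_zero _ _ hy
          calc ∫⁻ z, V z ∂μ
              = ∫⁻ z in H, V z ∂μ + ∫⁻ z in Hᶜ, V z ∂μ := (lintegral_add_compl V hH).symm
            _ = ∫⁻ z in Hᶜ, V z ∂μ := by
                rw [setLIntegral_measure_zero _ _ hy, zero_add]
            _ = ∫⁻ z in Hᶜ, (K + r * g z) ∂μ := by
                refine setLIntegral_congr_fun hH.compl (fun z hz => ?_)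
                rw [hVeq z hz, hVP z]
            _ = K * μ Hᶜ + r * ∫⁻ z in Hᶜ, g z ∂μ := by
                rw [lintegral_add_left measurable_const, setLIntegral_const,
                  lintegral_const_mul _ hgmeas]
            _ = K + r * ∫⁻ z, g z ∂μ := by
                rw [hμc, mul_one, ← lintegral_add_compl g hH (μ := μ), hgH, zero_add]
            _ = K + r * ∫⁻ z, V z ∂(iterKernel P (t + 1) y) := by
                rw [iterKernel_succ, Kernel.lintegral_comp _ _ _ hVmeas]
        simp only [hJdef]
        rw [lintegral_congr_ae key, lintegral_add_left measurable_const,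
          lintegral_const, measure_univ, mul_one, lintegral_const_mul _ (hJfam (t + 1))]
      have hlow : ∀ n t, K * (∑ k ∈ Finset.range n, r ^ k) ≤ J t := by
        intro n
        induction n with
        | zero => simp
        | succ n ih =>
          intro t
          rw [hstep t]
          have hgs : (∑ k ∈ Finset.range (n + 1), r ^ k) =
              1 + r * ∑ k ∈ Finset.range n, r ^ k := by
            rw [Finset.sum_range_succ', pow_zero, Finset.mul_sum]
            rw [add_comm]
            congr 1
            exact Finset.sum_congr rfl fun k _ => by rw [pow_succ', mul_comm r (r ^ k)]
          calc K * (∑ k ∈ Finset.range (n + 1), r ^ k)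
              = K + r * (K * ∑ k ∈ Finset.range n, r ^ k) := by rw [hgs]; ring
            _ ≤ K + r * J (t + 1) := add_le_add_right (mul_le_mul_right (ih (t + 1)) r) K
      have hKle : K * p⁻¹ ≤ I := by
        rw [← hsumr, ENNReal.tsum_eq_iSup_nat, ENNReal.mul_iSup]
        exact iSup_le fun n => hJ0 ▸ hlow n 0
      have hKI : K ≤ p * I := by
        calc K = K * p⁻¹ * p := by
              rw [mul_assoc, ENNReal.inv_mul_cancel hp0.ne' hptop, mul_one]
          _ ≤ I * p := mul_le_mul_left hKle p
          _ = p * I := mul_comm _ _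
      have hfin : p * I ≠ ⊤ := ENNReal.mul_ne_top hptop hItop
      have : p * I < K := by
        rw [hKdef, add_comm]
        exact ENNReal.lt_add_right hfin one_ne_zero
      exact absurd hKI this.not_ge
    have hVtop : ∀ x ∉ H, V x = ⊤ := by
      intro x hx
      rw [hVeq x hx, hI, ENNReal.mul_top hp0.ne']
      simp
    have hqHc : 0 < q Hᶜ := by
      have hν1 : ν Hᶜ = 1 := by
        rw [measure_compl hH (measure_ne_top _ _), hνH, measure_univ, tsub_zero]
      have h1 : p * r ^ 0 * ∫⁻ y, iterKernel P 0 y Hᶜ ∂ν = p := by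
        rw [iterKernel_zero]
        simp only [Kernel.id_apply, pow_zero, mul_one]
        simp_rw [Measure.dirac_apply' _ hH.compl]
        rw [lintegral_indicator_one hH.compl, hν1, mul_one]
      calc (0 : ℝ≥0∞) < p := hp0
        _ = p * r ^ 0 * ∫⁻ y, iterKernel P 0 y Hᶜ ∂ν := h1.symm
        _ ≤ ∑' t : ℕ, p * r ^ t * ∫⁻ y, iterKernel P t y Hᶜ ∂ν := ENNReal.le_tsum 0
        _ = q Hᶜ := (hqswap Hᶜ hH.compl).symm
    have hsub : Hᶜ ⊆ {x | ¬ V x < ⊤} := fun x hx => by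
      simp [hVtop x hx]
    have : q Hᶜ = 0 := measure_mono_null hsub (ae_iff.1 hae)
    exact absurd this hqHc.ne'
  tfae_finish
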